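/- Let P = (x₁,…,xₙ : r₁,…,r_m) be a finite presentation of a group G satisfying condition (2.1) with distinct orders q₁,…,q_p, and let w be a word in x₁,…,xₙ with [w] = 1 in G. Then the group G_w presented by Q_w is trivial. -/
import Mathlib


/-- Generators of the presentation `Q_w`: `Sum.inl i` is the generator `xᵢ`
(for `i : Fin n`), while `Sum.inr 0 = a`, `Sum.inr 1 = α`, `Sum.inr 2 = b`,
`Sum.inr 3 = β`. -/
abbrev QwGen (n : ℕ) := Fin n ⊕ Fin 4

/-- The relators of the presentation `Q_w`: the relators `r₁, …, r_m` (indexed by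
`Sum.inl j`), the relators (iii)/(iv) (indexed by `Sum.inr (Sum.inl i)`, zero-based:
for `i < p` the relator `a^{-qᵢ} xᵢ α^{qᵢ} (β^{-(i+1)} b β^{i+1})⁻¹` and for
`p ≤ i < n` the relator `a^{-(q+i+1)} xᵢ α^{q+i+1} (β^{-(i+1)} b β^{i+1})⁻¹`, where
`q = max {q₁, …, q_p}`), and the relators (i), (ii), (v)
(indexed by `Sum.inr (Sum.inr t)` for `t = 0, 1, 2`). -/
def qwRel (n m p : ℕ) (r : Fin m → FreeGroup (Fin n)) (q : Fin p → ℕ)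
    (w : FreeGroup (Fin n)) : Fin m ⊕ (Fin n ⊕ Fin 3) → FreeGroup (QwGen n) :=
  let a : FreeGroup (QwGen n) := FreeGroup.of (Sum.inr 0)
  let al : FreeGroup (QwGen n) := FreeGroup.of (Sum.inr 1)
  let b : FreeGroup (QwGen n) := FreeGroup.of (Sum.inr 2)
  let be : FreeGroup (QwGen n) := FreeGroup.of (Sum.inr 3)
  let x : Fin n → FreeGroup (QwGen n) := fun i => FreeGroup.of (Sum.inl i)
  let W : FreeGroup (QwGen n) := FreeGroup.map Sum.inl w
  let Q : ℕ := Finset.univ.sup q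
  fun j => match j with
  | Sum.inl j => FreeGroup.map Sum.inl (r j)
  | Sum.inr (Sum.inl i) =>
      if h : (i : ℕ) < p then
        a ^ (-(q ⟨i, h⟩ : ℤ)) * x i * al ^ (q ⟨i, h⟩) *
          (be ^ (-((i : ℕ) + 1 : ℤ)) * b * be ^ ((i : ℕ) + 1))⁻¹
      else
        a ^ (-((Q + (i : ℕ) + 1 : ℕ) : ℤ)) * x i * al ^ (Q + (i : ℕ) + 1) *
          (be ^ (-((i : ℕ) + 1 : ℤ)) * b * be ^ ((i : ℕ) + 1))⁻¹
  | Sum.inr (Sum.inr t) =>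
      if t = 0 then a * al * a⁻¹ * (b ^ 2)⁻¹
      else if t = 1 then al * a * al⁻¹ * (b * be * b⁻¹)⁻¹
      else (W * al ^ 2 * W⁻¹ * (al ^ 2)⁻¹) *
        (be ^ (-((n : ℤ) + 1)) * b * be ^ (n + 1))⁻¹

/-- Let `P = (x₁,…,xₙ : r₁,…,r_m)` be a finite presentation of a
group `G = PresentedGroup (Set.range r)` satisfying condition (2.1) with distinct
orders `q₁,…,q_p`, and let `w` be a word in `x₁,…,xₙ`.  Then the group `G_w`
presented by `Q_w` is trivial whenever `[w] = 1` in `G`. -/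
theorem qw_trivial_of_word_trivial (n m p : ℕ) (hp1 : 1 ≤ p) (hpn : p ≤ n)
    (r : Fin m → FreeGroup (Fin n)) (q : Fin p → ℕ)
    (hq1 : ∀ i, 1 ≤ q i) (hqinj : Function.Injective q)
    (horder : ∀ i : Fin p,
      orderOf (Abelianization.of
        (PresentedGroup.of (rels := Set.range r) (Fin.castLE hpn i))) = q i)
    (hgcd : Finset.univ.gcd q = 1)
    (w : FreeGroup (Fin n)) (hw : PresentedGroup.mk (Set.range r) w = 1) :
    Subsingleton (PresentedGroup (Set.range (qwRel n m p r q w))) := by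
  classical
  set rels := Set.range (qwRel n m p r q w) with hrels
  set Gw := PresentedGroup rels with hGw
  set mkw : FreeGroup (QwGen n) →* Gw := PresentedGroup.mk rels with hmkw
  have hrel : ∀ j, mkw (qwRel n m p r q w j) = 1 := fun j =>
    (QuotientGroup.eq_one_iff _).2 (Subgroup.subset_normalClosure ⟨j, rfl⟩)
  set A : Gw := PresentedGroup.of (Sum.inr 0) with hA
  set Al : Gw := PresentedGroup.of (Sum.inr 1) with hAldef
  set B : Gw := PresentedGroup.of (Sum.inr 2) with hBdef
  set Be : Gw := PresentedGroup.of (Sum.inr 3) with hBedef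
  set X : Fin n → Gw := fun i => PresentedGroup.of (Sum.inl i) with hX
  have hmkof : ∀ g : QwGen n, mkw (FreeGroup.of g) = PresentedGroup.of g := fun _ => rfl
  -- the homomorphism from the free group on the xᵢ
  set ψ : FreeGroup (Fin n) →* Gw := mkw.comp (FreeGroup.map Sum.inl) with hψ
  have hψr : ∀ j, ψ (r j) = 1 := fun j => hrel (Sum.inl j)
  have hker : Subgroup.normalClosure (Set.range r) ≤ ψ.ker :=
    Subgroup.normalClosure_le_normal (by rintro _ ⟨j, rfl⟩; exact hψr j)
  have hW : mkw (FreeGroup.map Sum.inl w) = 1 :=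
    hker ((QuotientGroup.eq_one_iff w).1 hw)
  -- relation (v) gives B = 1
  have h2 := hrel (Sum.inr (Sum.inr 2))
  rw [show qwRel n m p r q w (Sum.inr (Sum.inr 2)) =
      (FreeGroup.map Sum.inl w * FreeGroup.of (Sum.inr 1) ^ 2 * (FreeGroup.map Sum.inl w)⁻¹ *
        (FreeGroup.of (Sum.inr 1) ^ 2)⁻¹) *
      (FreeGroup.of (Sum.inr 3) ^ (-((n : ℤ) + 1)) * FreeGroup.of (Sum.inr 2) *
        FreeGroup.of (Sum.inr 3) ^ (n + 1))⁻¹ from by simp [qwRel]] at h2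
  simp only [map_mul, map_inv, map_pow, map_zpow, hmkof, hW] at h2
  rw [← hAldef, ← hBdef, ← hBedef] at h2
  have hB : B = 1 := by
    have e : B = Be ^ ((n : ℤ) + 1) *
        ((1 : Gw) * Al ^ 2 * (1 : Gw)⁻¹ * (Al ^ 2)⁻¹ *
          (Be ^ (-((n : ℤ) + 1)) * B * Be ^ (n + 1))⁻¹)⁻¹ * (Be ^ (n + 1))⁻¹ := by
      group
    rw [h2] at e
    rw [e]; group
  -- relation (i) gives Al = 1
  have h0 := hrel (Sum.inr (Sum.inr 0))
  rw [show qwRel n m p r q w (Sum.inr (Sum.inr 0)) =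
      FreeGroup.of (Sum.inr 0) * FreeGroup.of (Sum.inr 1) * (FreeGroup.of (Sum.inr 0))⁻¹ *
        (FreeGroup.of (Sum.inr 2) ^ 2)⁻¹ from by simp [qwRel]] at h0
  simp only [map_mul, map_inv, map_pow, hmkof] at h0
  rw [← hA, ← hAldef, ← hBdef, hB] at h0
  have hAl : Al = 1 := by
    have e : Al = A⁻¹ * (A * Al * A⁻¹ * ((1 : Gw) ^ 2)⁻¹) * A * ((1:Gw) ^ 2)⁻¹⁻¹ * 1 := by group
    rw [h0] at e
    rw [e]; group
  -- relation (ii) gives Be = A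
  have h1 := hrel (Sum.inr (Sum.inr 1))
  rw [show qwRel n m p r q w (Sum.inr (Sum.inr 1)) =
      FreeGroup.of (Sum.inr 1) * FreeGroup.of (Sum.inr 0) * (FreeGroup.of (Sum.inr 1))⁻¹ *
        (FreeGroup.of (Sum.inr 2) * FreeGroup.of (Sum.inr 3) * (FreeGroup.of (Sum.inr 2))⁻¹)⁻¹
      from by simp [qwRel]] at h1
  simp only [map_mul, map_inv, hmkof] at h1
  rw [← hA, ← hAldef, ← hBdef, ← hBedef, hB, hAl] at h1
  have hBe : Be = A := by
    have e : Be = (1:Gw)⁻¹ *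
        ((1:Gw) * A * (1:Gw)⁻¹ * ((1:Gw) * Be * (1:Gw)⁻¹)⁻¹)⁻¹ * (1:Gw)⁻¹⁻¹ * A := by group
    rw [h1] at e
    rw [e]; group
  -- relations (iii)/(iv): each X i is a power of A
  have hXpow : ∀ i : Fin n, ∀ e : ℕ,
      mkw (qwRel n m p r q w (Sum.inr (Sum.inl i))) = 1 →
      qwRel n m p r q w (Sum.inr (Sum.inl i)) =
        FreeGroup.of (Sum.inr 0) ^ (-(e : ℤ)) * FreeGroup.of (Sum.inl i) *
          FreeGroup.of (Sum.inr 1) ^ e *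
          (FreeGroup.of (Sum.inr 3) ^ (-((i : ℕ) + 1 : ℤ)) * FreeGroup.of (Sum.inr 2) *
            FreeGroup.of (Sum.inr 3) ^ ((i : ℕ) + 1))⁻¹ →
      X i = A ^ e := by
    intro i e hone heq
    rw [heq] at hone
    simp only [map_mul, map_inv, map_pow, map_zpow, hmkof] at hone
    have hXi : X i = PresentedGroup.of (Sum.inl i) := rfl
    rw [← hA, ← hAldef, ← hBdef, ← hBedef, ← hXi, hB, hAl] at hone
    have e3 : X i = A ^ ((e : ℕ) : ℤ) *
          (A ^ (-(e : ℤ)) * X i * (1 : Gw) ^ e *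
            (Be ^ (-((i : ℕ) + 1 : ℤ)) * 1 * Be ^ ((i : ℕ) + 1))⁻¹) *
          (Be ^ (-((i : ℕ) + 1 : ℤ)) * Be ^ ((i : ℕ) + 1)) * ((1:Gw) ^ e)⁻¹ := by group
    rw [hone] at e3
    rw [e3]; group
  have hXq : ∀ i : Fin p, X (Fin.castLE hpn i) = A ^ (q i) := by
    intro i
    have hlt : ((Fin.castLE hpn i : Fin n) : ℕ) < p := i.isLt
    refine hXpow (Fin.castLE hpn i) (q i) (hrel _) ?_
    have : (⟨((Fin.castLE hpn i : Fin n) : ℕ), hlt⟩ : Fin p) = i := rfl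
    simp [qwRel, hlt, this]
  have hXgen : ∀ i : Fin n, ∃ e : ℕ, X i = A ^ e := by
    intro i
    by_cases hlt : (i : ℕ) < p
    · exact ⟨q ⟨i, hlt⟩, hXpow i (q ⟨i, hlt⟩) (hrel _) (by simp [qwRel, hlt])⟩
    · exact ⟨Finset.univ.sup q + (i : ℕ) + 1,
        hXpow i _ (hrel _) (by simp [qwRel, hlt])⟩
  -- every element of Gw is a power of A
  have hgen : ∀ g : Gw, g ∈ Subgroup.zpowers A := by
    intro g
    refine PresentedGroup.generated_by rels (Subgroup.zpowers A) ?_ g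
    rintro (i | t)
    · obtain ⟨e, he⟩ := hXgen i
      show X i ∈ Subgroup.zpowers A
      rw [he]
      exact (Subgroup.zpowers A).pow_mem (Subgroup.mem_zpowers A) e
    · fin_cases t
      · exact Subgroup.mem_zpowers A
      · show Al ∈ Subgroup.zpowers A
        rw [hAl]; exact (Subgroup.zpowers A).one_mem
      · show B ∈ Subgroup.zpowers A
        rw [hB]; exact (Subgroup.zpowers A).one_mem
      · show Be ∈ Subgroup.zpowers A
        rw [hBe]; exact Subgroup.mem_zpowers A
  have hcomm : ∀ x y : Gw, x * y = y * x := by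
    intro x y
    obtain ⟨j, hj⟩ := Subgroup.mem_zpowers_iff.1 (hgen x)
    obtain ⟨k, hk⟩ := Subgroup.mem_zpowers_iff.1 (hgen y)
    rw [← hj, ← hk, ← zpow_add, ← zpow_add, add_comm]
  letI : CommGroup Gw := { (inferInstance : Group Gw) with mul_comm := hcomm }
  -- the homomorphism from G to Gw, through the abelianization
  have hφker : ∀ x ∈ Subgroup.normalClosure (Set.range r), ψ x = 1 := fun x hx => hker hx
  set φ : PresentedGroup (Set.range r) →* Gw :=
    QuotientGroup.lift (Subgroup.normalClosure (Set.range r)) ψ hφker with hφ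
  set Φ : Abelianization (PresentedGroup (Set.range r)) →* Gw := Abelianization.lift φ with hΦ
  -- A^(q i * q i) = 1
  have hApow : ∀ i : Fin p, A ^ (q i * q i) = 1 := by
    intro i
    have h1i : (Abelianization.of
        (PresentedGroup.of (rels := Set.range r) (Fin.castLE hpn i))) ^ (q i) = 1 := by
      rw [← horder i]; exact pow_orderOf_eq_one _
    have := congrArg Φ h1i
    simp only [map_pow, map_one] at this
    have hΦof : Φ (Abelianization.of (PresentedGroup.of (rels := Set.range r)
        (Fin.castLE hpn i))) = X (Fin.castLE hpn i) := rfl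
    rw [hΦof, hXq i, ← pow_mul] at this
    exact this
  have hdvd : ∀ i : Fin p, orderOf A ∣ q i * q i := fun i =>
    orderOf_dvd_of_pow_eq_one (hApow i)
  have hordA : orderOf A = 1 := by
    rw [Nat.eq_one_iff_not_exists_prime_dvd]
    intro ℓ hℓ hdA
    have hℓq : ∀ i : Fin p, ℓ ∣ q i := by
      intro i
      have := hdA.trans (hdvd i)
      rcases (Nat.Prime.dvd_mul hℓ).1 this with h | h <;> exact h
    have : ℓ ∣ Finset.univ.gcd q := Finset.dvd_gcd fun i _ => hℓq i
    rw [hgcd] at this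
    exact hℓ.one_lt.ne' (Nat.eq_one_of_dvd_one this) |>.elim
  have hA1 : A = 1 := orderOf_eq_one_iff.1 hordA
  constructor
  intro x y
  obtain ⟨j, hj⟩ := Subgroup.mem_zpowers_iff.1 (hgen x)
  obtain ⟨k, hk⟩ := Subgroup.mem_zpowers_iff.1 (hgen y)
  rw [← hj, ← hk, hA1, one_zpow, one_zpow]
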